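/- Let p > 3 be a prime and let C = 2σ₁³ + σ₁²σ₂ − σ₁² − 4σ₂² − 8σ₁σ₂ + 12σ₁ + 12σ₂ − 36 ∈ F̄_p[σ₁, σ₂]. Then C is irreducible, the affine plane curve C = 0 has a unique singular point, namely (σ₁, σ₂) = (−6, 12), and the singularity is a cusp: after the translation σ₁′ = σ₁ + 6, σ₂′ = σ₂ − 12, the lowest-degree homogeneous component of the translated polynomial is −(5σ₁′ + 2σ₂′)², a scalar multiple of the square of a linear form. Similarly, for p = 3 the polynomial 2σ₁³ + σ₁²σ₂ − σ₁² − σ₂² − 2σ₁σ₂ ∈ F̄_3[σ₁, σ₂] is irreducible, its zero locus has the unique singular point (0,0), and its lowest-degree homogeneous component at (0,0) is −(σ₁ + σ₂)². -/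

import Mathlib

open MvPolynomial Finset in
private lemma aux_hc_top_ne_zero {σ R : Type*} [CommSemiring R] {f : MvPolynomial σ R}
    (hf : f ≠ 0) : homogeneousComponent f.totalDegree f ≠ 0 := by
  obtain ⟨d, hd, hdeg⟩ := Finset.exists_mem_eq_sup f.support
    (support_nonempty.mpr hf) (fun m => m.sum fun _ e => e)
  intro h0
  have hcf := coeff_homogeneousComponent (σ := σ) (R := R) f.totalDegree f d
  rw [h0] at hcf
  have hdd : d.degree = f.totalDegree := by
    rw [totalDegree, hdeg]
    simp [Finsupp.degree, Finsupp.sum]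
    rfl
  rw [if_pos hdd] at hcf
  exact (mem_support_iff.mp hd) hcf.symm

open MvPolynomial Finset in
private lemma aux_hc_mul_top {σ R : Type*} [CommSemiring R] (f g : MvPolynomial σ R) :
    homogeneousComponent (f.totalDegree + g.totalDegree) (f * g)
      = homogeneousComponent f.totalDegree f * homogeneousComponent g.totalDegree g := by
  set m := f.totalDegree with hm
  set n := g.totalDegree with hn
  have key : ∀ i ∈ range (m+1), ∀ j ∈ range (n+1),
      homogeneousComponent (m+n) (homogeneousComponent i f * homogeneousComponent j g)
        = if i = m ∧ j = n then homogeneousComponent i f * homogeneousComponent j g else 0 := by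
    intro i hi j hj
    have hij : (homogeneousComponent i f * homogeneousComponent j g) ∈
        homogeneousSubmodule σ R (i + j) :=
      mem_homogeneousSubmodule _ _ |>.mpr
        ((homogeneousComponent_isHomogeneous i f).mul (homogeneousComponent_isHomogeneous j g))
    rw [homogeneousComponent_of_mem hij]
    simp only [mem_range] at hi hj
    by_cases h : i = m ∧ j = n
    · rw [if_pos (by omega), if_pos h]
    · rw [if_neg (by omega), if_neg h]
  conv_lhs => rw [← sum_homogeneousComponent f, ← sum_homogeneousComponent g, ← hm, ← hn]
  rw [Finset.sum_mul_sum, map_sum]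
  rw [Finset.sum_congr rfl (fun i hi => map_sum _ _ _)]
  rw [Finset.sum_congr rfl (fun i hi => Finset.sum_congr rfl (fun j hj => key i hi j hj))]
  rw [Finset.sum_eq_single_of_mem m (self_mem_range_succ m)
    (fun i _ hne => by simp [hne])]
  rw [Finset.sum_eq_single_of_mem n (self_mem_range_succ n)
    (fun j _ hne => by simp [hne])]
  simp

open MvPolynomial in
private lemma aux_totalDegree_mul_eq {σ R : Type*} [CommRing R] [IsDomain R]
    {f g : MvPolynomial σ R} (hf : f ≠ 0) (hg : g ≠ 0) :
    (f * g).totalDegree = f.totalDegree + g.totalDegree := by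
  refine le_antisymm (totalDegree_mul f g) ?_
  by_contra h
  push_neg at h
  have h0 : homogeneousComponent (f.totalDegree + g.totalDegree) (f * g) = 0 :=
    homogeneousComponent_eq_zero _ _ h
  rw [aux_hc_mul_top] at h0
  exact mul_ne_zero (aux_hc_top_ne_zero hf) (aux_hc_top_ne_zero hg) h0

private lemma aux_finsupp_class {d : Fin 2 →₀ ℕ} (hd : d 0 + d 1 ≤ 1) :
    d = 0 ∨ d = Finsupp.single 0 1 ∨ d = Finsupp.single 1 1 := by
  have hcases : (d 0 = 0 ∧ d 1 = 0) ∨ (d 0 = 1 ∧ d 1 = 0) ∨ (d 0 = 0 ∧ d 1 = 1) := by omega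
  rcases hcases with ⟨h0, h1⟩ | ⟨h0, h1⟩ | ⟨h0, h1⟩
  · left; ext i; fin_cases i <;> simp [h0, h1]
  · right; left; ext i; fin_cases i <;> simp [h0, h1, Finsupp.single_apply]
  · right; right; ext i; fin_cases i <;> simp [h0, h1, Finsupp.single_apply]

private lemma aux_deg_sum_eq {d : Fin 2 →₀ ℕ} : (d.sum fun _ e => e) = d 0 + d 1 := by
  rw [Finsupp.sum_fintype _ _ (fun _ => rfl)]
  exact Fin.sum_univ_two d

open MvPolynomial in
private lemma aux_eq_lin {K : Type*} [Field K] {f : MvPolynomial (Fin 2) K}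
    (hf : f.totalDegree ≤ 1) :
    f = MvPolynomial.C (coeff (Finsupp.single 0 1) f) * X 0
      + MvPolynomial.C (coeff (Finsupp.single 1 1) f) * X 1
      + MvPolynomial.C (coeff 0 f) := by
  apply MvPolynomial.ext
  intro d
  by_cases hmem : d 0 + d 1 ≤ 1
  · rcases aux_finsupp_class hmem with rfl | rfl | rfl <;>
      simp [coeff_C_mul, coeff_X', coeff_C, Finsupp.single_eq_single_iff,
        Finsupp.single_eq_zero, eq_comm]
  · have hd0 : coeff d f = 0 := by
      by_contra hne
      have := le_totalDegree (p := f) (mem_support_iff.mpr hne)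
      rw [aux_deg_sum_eq] at this
      omega
    rw [hd0]
    have h1 : d ≠ Finsupp.single 0 1 := by
      rintro rfl; simp [Finsupp.single_apply] at hmem
    have h2 : d ≠ Finsupp.single 1 1 := by
      rintro rfl; simp [Finsupp.single_apply] at hmem
    have h0 : d ≠ 0 := by rintro rfl; simp at hmem
    simp [coeff_C_mul, coeff_X', coeff_C, Ne.symm h1, Ne.symm h2, Ne.symm h0, eq_comm]

open MvPolynomial in
private lemma aux_eq_C {K : Type*} [Field K] {f : MvPolynomial (Fin 2) K}
    (hf : f.totalDegree = 0) : f = MvPolynomial.C (coeff 0 f) := by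
  apply MvPolynomial.ext
  intro d
  by_cases hd : d = 0
  · subst hd; simp
  · have : coeff d f = 0 := by
      by_contra hne
      have hmem := (totalDegree_eq_zero_iff _ f).mp hf d (mem_support_iff.mpr hne)
      exact hd (Finsupp.ext fun i => hmem i)
    rw [this, coeff_C, if_neg (fun h => hd h.symm)]

private lemma aux_cubic_coeffs {K : Type*} [Field K] {A B C D : K}
    (h : Polynomial.C A * Polynomial.X ^ 3 + Polynomial.C B * Polynomial.X ^ 2
        + Polynomial.C C * Polynomial.X + Polynomial.C D = 0) :
    A = 0 ∧ B = 0 ∧ C = 0 := by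
  have h3 := congrArg (fun q => Polynomial.coeff q 3) h
  have h2 := congrArg (fun q => Polynomial.coeff q 2) h
  have h1 := congrArg (fun q => Polynomial.coeff q 1) h
  simp only [Polynomial.coeff_add, Polynomial.coeff_C_mul, Polynomial.coeff_X_pow,
    Polynomial.coeff_C, Polynomial.coeff_X, Polynomial.coeff_zero] at h3 h2 h1
  norm_num at h3 h2 h1
  exact ⟨h3, h2, h1⟩

private lemma aux_quad_coeffs {K : Type*} [Field K] {A B D : K}
    (h : Polynomial.C A * Polynomial.X ^ 2 + Polynomial.C B * Polynomial.X
        + Polynomial.C D = 0) :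
    A = 0 := by
  have h2 := congrArg (fun q => Polynomial.coeff q 2) h
  simp only [Polynomial.coeff_add, Polynomial.coeff_C_mul, Polynomial.coeff_X_pow,
    Polynomial.coeff_C, Polynomial.coeff_X, Polynomial.coeff_zero] at h2
  norm_num at h2
  exact h2

open MvPolynomial in
private lemma aux_irred_of_cubic {K : Type*} [Field K] {f : MvPolynomial (Fin 2) K}
    (htot : f.totalDegree = 3)
    (hnl : ∀ a b c : K, ¬(a = 0 ∧ b = 0) →
        ¬ (MvPolynomial.C a * X 0 + MvPolynomial.C b * X 1 + MvPolynomial.C c ∣ f)) :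
    Irreducible f := by
  have hf0 : f ≠ 0 := by rintro rfl; simp at htot
  have key : ∀ F : MvPolynomial (Fin 2) K, F.totalDegree = 1 → ¬ (F ∣ f) := by
    intro F hF hdvd
    have hrep := aux_eq_lin (le_of_eq hF)
    refine hnl (coeff (Finsupp.single 0 1) F) (coeff (Finsupp.single 1 1) F) (coeff 0 F)
      ?_ (by rwa [← hrep])
    rintro ⟨ha, hb⟩
    rw [ha, hb] at hrep
    simp only [map_zero, zero_mul, zero_add] at hrep
    rw [hrep, totalDegree_C] at hF
    exact absurd hF (by norm_num)
  refine ⟨?_, ?_⟩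
  · intro hu
    obtain ⟨g, hg⟩ := isUnit_iff_exists_inv.mp hu
    have hg0 : g ≠ 0 := by rintro rfl; simp at hg
    have hdeg := aux_totalDegree_mul_eq hf0 hg0
    rw [hg, totalDegree_one, htot] at hdeg
    omega
  · rintro F G rfl
    by_contra hcon
    push_neg at hcon
    obtain ⟨hFu, hGu⟩ := hcon
    have hF0 : F ≠ 0 := by rintro rfl; simp at hf0
    have hG0 : G ≠ 0 := by rintro rfl; simp at hf0
    have hdeg := aux_totalDegree_mul_eq hF0 hG0
    rw [htot] at hdeg
    have hF1 : 1 ≤ F.totalDegree := by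
      rcases Nat.eq_zero_or_pos F.totalDegree with h0 | h
      · exfalso
        have hcF := aux_eq_C h0
        have hne : coeff 0 F ≠ 0 := fun h => hF0 (by rw [hcF, h, map_zero])
        exact hFu (by rw [hcF]; exact (isUnit_iff_ne_zero.mpr hne).map MvPolynomial.C)
      · exact h
    have hG1 : 1 ≤ G.totalDegree := by
      rcases Nat.eq_zero_or_pos G.totalDegree with h0 | h
      · exfalso
        have hcG := aux_eq_C h0
        have hne : coeff 0 G ≠ 0 := fun h => hG0 (by rw [hcG, h, map_zero])
        exact hGu (by rw [hcG]; exact (isUnit_iff_ne_zero.mpr hne).map MvPolynomial.C)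
      · exact h
    rcases (by omega : F.totalDegree = 1 ∨ G.totalDegree = 1) with h1 | h1
    · exact key F h1 ⟨G, rfl⟩
    · exact key G h1 ⟨F, mul_comm F G⟩

set_option maxHeartbeats 1600000 in
open MvPolynomial in
/-- Geometry of the automorphism locus of `M₂(F̄_p)`: for `p > 3` the cubic
`2σ₁³ + σ₁²σ₂ - σ₁² - 4σ₂² - 8σ₁σ₂ + 12σ₁ + 12σ₂ - 36` is irreducible, its zero locus has the
unique singular point `(-6, 12)`, and after translating that point to the origin the
lowest-degree homogeneous component is `-(5σ₁' + 2σ₂')²` (a cusp); similarly for `p = 3`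
with the cubic `2σ₁³ + σ₁²σ₂ - σ₁² - σ₂² - 2σ₁σ₂`, whose unique singular point is `(0,0)`
with lowest-degree homogeneous component `-(σ₁ + σ₂)²`. -/
theorem aut_locus_is_cuspidal_cubic (p : ℕ) [Fact p.Prime]
    (C C' B : MvPolynomial (Fin 2) (AlgebraicClosure (ZMod p)))
    (hC : C = 2 * X 0 ^ 3 + X 0 ^ 2 * X 1 - X 0 ^ 2 - 4 * X 1 ^ 2 - 8 * X 0 * X 1
        + 12 * X 0 + 12 * X 1 - 36)
    (hC' : C' = aeval ![X 0 - 6, X 1 + 12] C)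
    (hB : B = 2 * X 0 ^ 3 + X 0 ^ 2 * X 1 - X 0 ^ 2 - X 1 ^ 2 - 2 * X 0 * X 1) :
    (3 < p →
      Irreducible C ∧
      (∀ a b : AlgebraicClosure (ZMod p),
        (eval ![a, b] C = 0 ∧ eval ![a, b] (pderiv 0 C) = 0 ∧
          eval ![a, b] (pderiv 1 C) = 0) ↔ a = -6 ∧ b = 12) ∧
      homogeneousComponent 0 C' = 0 ∧ homogeneousComponent 1 C' = 0 ∧
      homogeneousComponent 2 C' = -(5 * X 0 + 2 * X 1) ^ 2) ∧
    (p = 3 →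
      Irreducible B ∧
      (∀ a b : AlgebraicClosure (ZMod p),
        (eval ![a, b] B = 0 ∧ eval ![a, b] (pderiv 0 B) = 0 ∧
          eval ![a, b] (pderiv 1 B) = 0) ↔ a = 0 ∧ b = 0) ∧
      homogeneousComponent 0 B = 0 ∧ homogeneousComponent 1 B = 0 ∧
      homogeneousComponent 2 B = -(X 0 + X 1) ^ 2) := by
  have hch : ∀ n : ℕ, 0 < n → n < p → (n : AlgebraicClosure (ZMod p)) ≠ 0 := by
    intro n hn hnp h0
    have : p ∣ n := (CharP.cast_eq_zero_iff (AlgebraicClosure (ZMod p)) p n).mp h0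
    have := Nat.le_of_dvd hn this
    omega
  constructor
  · -- p > 3 case
    intro hp
    have h2 : (2 : AlgebraicClosure (ZMod p)) ≠ 0 := by
      have := hch 2 (by norm_num) (by omega); exact_mod_cast this
    have h3 : (3 : AlgebraicClosure (ZMod p)) ≠ 0 := by
      have := hch 3 (by norm_num) (by omega); exact_mod_cast this
    have h4 : (4 : AlgebraicClosure (ZMod p)) ≠ 0 := by
      intro h; exact h2 (by
        have : (2:AlgebraicClosure (ZMod p))^2 = 0 := by
          rw [show ((2:AlgebraicClosure (ZMod p))^2 = 4) by norm_num, h]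
        exact pow_eq_zero_iff (by norm_num) |>.mp this)
    have h8 : (8 : AlgebraicClosure (ZMod p)) ≠ 0 := by
      intro h; exact h2 (by
        have : (2:AlgebraicClosure (ZMod p))^3 = 0 := by
          rw [show ((2:AlgebraicClosure (ZMod p))^3 = 8) by norm_num, h]
        exact pow_eq_zero_iff (by norm_num) |>.mp this)
    -- homogeneous pieces of C
    have hT3 : (2 * X 0 ^ 3 + X 0 ^ 2 * X 1 :
        MvPolynomial (Fin 2) (AlgebraicClosure (ZMod p))).IsHomogeneous 3 := by
      have e1 : (MvPolynomial.C (2 : AlgebraicClosure (ZMod p)) * X 0 ^ 3 :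
          MvPolynomial (Fin 2) (AlgebraicClosure (ZMod p))).IsHomogeneous 3 :=
        isHomogeneous_C_mul_X_pow 2 0 3
      have e2 : (X 0 ^ 2 * X 1 :
          MvPolynomial (Fin 2) (AlgebraicClosure (ZMod p))).IsHomogeneous 3 := by
        have := (isHomogeneous_X_pow (R := AlgebraicClosure (ZMod p)) (0 : Fin 2) 2).mul
          (isHomogeneous_X (AlgebraicClosure (ZMod p)) (1 : Fin 2))
        simpa using this
      have := e1.add e2
      simpa [map_ofNat] using this
    have hQ2 : (MvPolynomial.C (-1 : AlgebraicClosure (ZMod p)) * X 0 ^ 2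
        + MvPolynomial.C (-4 : AlgebraicClosure (ZMod p)) * X 1 ^ 2
        + MvPolynomial.C (-8 : AlgebraicClosure (ZMod p)) * (X 0 * X 1) :
        MvPolynomial (Fin 2) (AlgebraicClosure (ZMod p))).IsHomogeneous 2 := by
      refine ((isHomogeneous_C_mul_X_pow _ 0 2).add (isHomogeneous_C_mul_X_pow _ 1 2)).add ?_
      exact IsHomogeneous.C_mul
        ((isHomogeneous_X (AlgebraicClosure (ZMod p)) 0).mul (isHomogeneous_X _ 1)) _
    have hQ1 : (MvPolynomial.C (12 : AlgebraicClosure (ZMod p)) * X 0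
        + MvPolynomial.C (12 : AlgebraicClosure (ZMod p)) * X 1 :
        MvPolynomial (Fin 2) (AlgebraicClosure (ZMod p))).IsHomogeneous 1 :=
      (isHomogeneous_C_mul_X _ 0).add (isHomogeneous_C_mul_X _ 1)
    have hQ0 : (MvPolynomial.C (-36 : AlgebraicClosure (ZMod p)) :
        MvPolynomial (Fin 2) (AlgebraicClosure (ZMod p))).IsHomogeneous 0 :=
      isHomogeneous_C _ _
    have hsplit4 : C = (2 * X 0 ^ 3 + X 0 ^ 2 * X 1)
        + ((MvPolynomial.C (-1 : AlgebraicClosure (ZMod p)) * X 0 ^ 2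
          + MvPolynomial.C (-4 : AlgebraicClosure (ZMod p)) * X 1 ^ 2
          + MvPolynomial.C (-8 : AlgebraicClosure (ZMod p)) * (X 0 * X 1))
        + ((MvPolynomial.C (12 : AlgebraicClosure (ZMod p)) * X 0
          + MvPolynomial.C (12 : AlgebraicClosure (ZMod p)) * X 1)
        + MvPolynomial.C (-36 : AlgebraicClosure (ZMod p)))) := by
      rw [hC]
      simp only [map_neg, map_ofNat, map_one, MvPolynomial.C_1]
      ring
    have hP3ne : (2 * X 0 ^ 3 + X 0 ^ 2 * X 1 :
        MvPolynomial (Fin 2) (AlgebraicClosure (ZMod p))) ≠ 0 := by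
      intro h
      have := congrArg (eval ![(1 : AlgebraicClosure (ZMod p)), 0]) h
      simp at this
      exact h2 this
    have htot : C.totalDegree = 3 := by
      refine le_antisymm ?_ ?_
      · rw [hsplit4]
        refine (totalDegree_add _ _).trans (max_le (hT3.totalDegree_le) ?_)
        refine (totalDegree_add _ _).trans
          (max_le (hQ2.totalDegree_le.trans (by norm_num : (2:ℕ) ≤ 3)) ?_)
        exact (totalDegree_add _ _).trans
          (max_le (hQ1.totalDegree_le.trans (by norm_num : (1:ℕ) ≤ 3))
            (hQ0.totalDegree_le.trans (by norm_num : (0:ℕ) ≤ 3)))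
      · by_contra hlt
        push_neg at hlt
        have h0 : homogeneousComponent 3 C = 0 := homogeneousComponent_eq_zero _ _ hlt
        rw [hsplit4, map_add,
          homogeneousComponent_of_mem ((mem_homogeneousSubmodule _ _).mpr hT3), map_add,
          homogeneousComponent_of_mem ((mem_homogeneousSubmodule _ _).mpr hQ2), map_add,
          homogeneousComponent_of_mem ((mem_homogeneousSubmodule _ _).mpr hQ1),
          homogeneousComponent_of_mem ((mem_homogeneousSubmodule _ _).mpr hQ0)] at h0
        norm_num at h0
        exact hP3ne h0
    -- no linear factor
    have hnl : ∀ a b c : AlgebraicClosure (ZMod p), ¬(a = 0 ∧ b = 0) →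
        ¬ (MvPolynomial.C a * X 0 + MvPolynomial.C b * X 1 + MvPolynomial.C c ∣ C) := by
      rintro a b c hab ⟨G, hG⟩
      by_cases hb : b = 0
      · have ha : a ≠ 0 := fun h => hab ⟨h, hb⟩
        set φ := aeval (R := AlgebraicClosure (ZMod p))
          ![Polynomial.C (-c/a), Polynomial.X] with hφ
        have hF0 : φ (MvPolynomial.C a * X 0 + MvPolynomial.C b * X 1 + MvPolynomial.C c)
            = 0 := by
          rw [hb]
          simp only [hφ, map_add, map_mul, aeval_X, aeval_C, Matrix.cons_val_zero,
            Matrix.cons_val_one, Matrix.head_cons, map_zero, zero_mul, add_zero,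
            Polynomial.algebraMap_eq]
          rw [← Polynomial.C_mul, ← Polynomial.C_add]
          rw [show a * (-c/a) + c = 0 by field_simp; ring]
          exact Polynomial.C_0
        have hC0 : φ C = 0 := by rw [hG, map_mul, hF0, zero_mul]
        have hCexp : φ C = Polynomial.C (-4 : AlgebraicClosure (ZMod p)) * Polynomial.X ^ 2
            + Polynomial.C ((-c/a)^2 - 8*(-c/a) + 12) * Polynomial.X
            + Polynomial.C (2*(-c/a)^3 - (-c/a)^2 + 12*(-c/a) - 36) := by
          rw [hC]
          simp only [hφ, map_add, map_sub, map_mul, map_pow, map_ofNat, aeval_X,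
            Matrix.cons_val_zero, Matrix.cons_val_one, Matrix.head_cons,
            Polynomial.C_add, Polynomial.C_sub, Polynomial.C_mul, Polynomial.C_pow,
            map_neg, Polynomial.C_neg, map_one, Polynomial.C_1, Polynomial.algebraMap_eq]
          ring
        rw [hC0] at hCexp
        have hq := aux_quad_coeffs hCexp.symm
        exact h4 (by linear_combination -hq)
      · set m := -a/b with hm
        set k := -c/b with hk
        set φ := aeval (R := AlgebraicClosure (ZMod p))
          ![Polynomial.X, Polynomial.C m * Polynomial.X + Polynomial.C k] with hφ
        have hmb : a + b * m = 0 := by rw [hm]; field_simp; try ring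
        have hkb : b * k + c = 0 := by rw [hk]; field_simp; try ring
        have hF0 : φ (MvPolynomial.C a * X 0 + MvPolynomial.C b * X 1 + MvPolynomial.C c)
            = 0 := by
          simp only [hφ, map_add, map_mul, aeval_X, aeval_C, Matrix.cons_val_zero,
            Matrix.cons_val_one, Matrix.head_cons, Polynomial.algebraMap_eq]
          rw [show Polynomial.C a * Polynomial.X
              + Polynomial.C b * (Polynomial.C m * Polynomial.X + Polynomial.C k)
              + Polynomial.C c
              = Polynomial.C (a + b*m) * Polynomial.X + Polynomial.C (b*k + c) from by
            rw [Polynomial.C_add, Polynomial.C_add, Polynomial.C_mul, Polynomial.C_mul]; ring]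
          rw [hmb, hkb]
          simp
        have hC0 : φ C = 0 := by rw [hG, map_mul, hF0, zero_mul]
        have hCexp : φ C = Polynomial.C (2 + m) * Polynomial.X ^ 3
            + Polynomial.C (k - 1 - 4*m^2 - 8*m) * Polynomial.X ^ 2
            + Polynomial.C (-8*m*k + 12 - 8*k + 12*m) * Polynomial.X
            + Polynomial.C (-4*k^2 + 12*k - 36) := by
          rw [hC]
          simp only [hφ, map_add, map_sub, map_mul, map_pow, map_ofNat, aeval_X,
            Matrix.cons_val_zero, Matrix.cons_val_one, Matrix.head_cons,
            Polynomial.C_add, Polynomial.C_sub, Polynomial.C_mul, Polynomial.C_pow,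
            map_neg, Polynomial.C_neg, map_one, Polynomial.C_1, Polynomial.algebraMap_eq]
          ring
        rw [hC0] at hCexp
        obtain ⟨hc3, hc2, hc1⟩ := aux_cubic_coeffs hCexp.symm
        have hk1 : k - 1 = 0 := by linear_combination hc2 + 4*m*hc3
        exact h4 (by linear_combination -hc1 + (-8*k+12)*hc3 + 8*hk1)
    refine ⟨aux_irred_of_cubic htot hnl, ?_, ?_⟩
    · -- singular points
      intro a b
      have hp0 : pderiv 0 C = 6 * X 0 ^2 + 2 * X 0 * X 1 - 2 * X 0 - 8 * X 1 + 12 := by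
        have hCc : C = MvPolynomial.C 2 * X 0 ^ 3 + X 0 ^ 2 * X 1 - X 0 ^ 2
            - MvPolynomial.C 4 * X 1 ^ 2 - MvPolynomial.C 8 * X 0 * X 1
            + MvPolynomial.C 12 * X 0 + MvPolynomial.C 12 * X 1 - MvPolynomial.C 36 := by
          rw [hC]; simp [map_ofNat]
        rw [hCc]
        simp only [map_add, map_sub, map_mul, pderiv_X_self, pderiv_X_of_ne,
          Derivation.leibniz, Derivation.leibniz_pow, pderiv_C, smul_eq_mul]
        simp [map_ofNat]
        try ring
      have hp1 : pderiv 1 C = X 0 ^ 2 - 8 * X 1 - 8 * X 0 + 12 := by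
        have hCc : C = MvPolynomial.C 2 * X 0 ^ 3 + X 0 ^ 2 * X 1 - X 0 ^ 2
            - MvPolynomial.C 4 * X 1 ^ 2 - MvPolynomial.C 8 * X 0 * X 1
            + MvPolynomial.C 12 * X 0 + MvPolynomial.C 12 * X 1 - MvPolynomial.C 36 := by
          rw [hC]; simp [map_ofNat]
        rw [hCc]
        simp only [map_add, map_sub, map_mul, pderiv_X_self, pderiv_X_of_ne,
          Derivation.leibniz, Derivation.leibniz_pow, pderiv_C, smul_eq_mul]
        simp [map_ofNat]
        try ring
      rw [hp0, hp1, hC]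
      simp only [map_add, map_sub, map_mul, map_pow, eval_X, map_ofNat, Matrix.cons_val_zero,
        Matrix.cons_val_one, Matrix.head_cons]
      constructor
      · rintro ⟨e1, e2, e3⟩
        have key : a * (a + 6)^2 = 0 := by linear_combination 4*e2 - 4*e3 + a*e3
        rcases mul_eq_zero.mp key with ha | ha
        · exfalso
          have e3' : 8*b - 12 = 0 := by linear_combination -e3 + (a-8)*ha
          have sq : (8*b - 12)*(8*b - 12) = 0 := by rw [e3']; ring
          have h432 : (432 : AlgebraicClosure (ZMod p)) = 0 := by
            linear_combination -16*e1 + 16*(2*a^2+a*b-a-8*b+12)*ha - sq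
          have hz : (2:AlgebraicClosure (ZMod p))^4*3^3 = 0 := by
            rw [show ((2:AlgebraicClosure (ZMod p))^4*3^3 = 432) by norm_num, h432]
          rcases mul_eq_zero.mp hz with h | h
          · exact h2 (pow_eq_zero_iff (by norm_num) |>.mp h)
          · exact h3 (pow_eq_zero_iff (by norm_num) |>.mp h)
        · have h6 : a + 6 = 0 := pow_eq_zero_iff (by norm_num) |>.mp ha
          have ha6 : a = -6 := by linear_combination h6
          have hbv : (8 : AlgebraicClosure (ZMod p)) * b = 8 * 12 := by
            linear_combination -e3 + (a-6)*h6 - 8*h6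
          exact ⟨ha6, mul_left_cancel₀ h8 hbv⟩
      · rintro ⟨rfl, rfl⟩
        refine ⟨by norm_num, by norm_num, by norm_num⟩
    · -- homogeneous components of C'
      have hsplit : C' = (2 * X 0 ^ 3 + X 0 ^ 2 * X 1) + (-(5 * X 0 + 2 * X 1) ^ 2) := by
        rw [hC', hC]
        simp only [map_add, map_sub, map_mul, map_pow, map_ofNat, aeval_X,
          Matrix.cons_val_zero, Matrix.cons_val_one, Matrix.head_cons]
        ring
      have hR2 : (-(5 * X 0 + 2 * X 1) ^ 2 :
          MvPolynomial (Fin 2) (AlgebraicClosure (ZMod p))).IsHomogeneous 2 := by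
        have h5 : (MvPolynomial.C (5 : AlgebraicClosure (ZMod p)) * X 0 :
            MvPolynomial (Fin 2) (AlgebraicClosure (ZMod p))).IsHomogeneous 1 :=
          isHomogeneous_C_mul_X _ 0
        have h2' : (MvPolynomial.C (2 : AlgebraicClosure (ZMod p)) * X 1 :
            MvPolynomial (Fin 2) (AlgebraicClosure (ZMod p))).IsHomogeneous 1 :=
          isHomogeneous_C_mul_X _ 1
        have := ((h5.add h2').pow 2).neg
        simpa [map_ofNat] using this
      have key : ∀ n : ℕ, homogeneousComponent n C'
          = (if n = 3 then (2 * X 0 ^ 3 + X 0 ^ 2 * X 1 :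
              MvPolynomial (Fin 2) (AlgebraicClosure (ZMod p))) else 0)
          + (if n = 2 then (-(5 * X 0 + 2 * X 1) ^ 2 :
              MvPolynomial (Fin 2) (AlgebraicClosure (ZMod p))) else 0) := by
        intro n
        rw [hsplit, map_add,
          homogeneousComponent_of_mem ((mem_homogeneousSubmodule _ _).mpr hT3),
          homogeneousComponent_of_mem ((mem_homogeneousSubmodule _ _).mpr hR2)]
      refine ⟨?_, ?_, ?_⟩
      · rw [key 0]; norm_num
      · rw [key 1]; norm_num
      · rw [key 2]; norm_num
  · -- p = 3 case
    intro hp3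
    subst hp3
    have h2 : (2 : AlgebraicClosure (ZMod 3)) ≠ 0 := by
      have := hch 2 (by norm_num) (by omega); exact_mod_cast this
    have h3z : (3 : AlgebraicClosure (ZMod 3)) = 0 := by
      have : ((3 : ℕ) : AlgebraicClosure (ZMod 3)) = 0 :=
        (CharP.cast_eq_zero_iff (AlgebraicClosure (ZMod 3)) 3 3).mpr dvd_rfl
      exact_mod_cast this
    have hT3 : (2 * X 0 ^ 3 + X 0 ^ 2 * X 1 :
        MvPolynomial (Fin 2) (AlgebraicClosure (ZMod 3))).IsHomogeneous 3 := by
      have e1 : (MvPolynomial.C (2 : AlgebraicClosure (ZMod 3)) * X 0 ^ 3 :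
          MvPolynomial (Fin 2) (AlgebraicClosure (ZMod 3))).IsHomogeneous 3 :=
        isHomogeneous_C_mul_X_pow 2 0 3
      have e2 : (X 0 ^ 2 * X 1 :
          MvPolynomial (Fin 2) (AlgebraicClosure (ZMod 3))).IsHomogeneous 3 := by
        have := (isHomogeneous_X_pow (R := AlgebraicClosure (ZMod 3)) (0 : Fin 2) 2).mul
          (isHomogeneous_X (AlgebraicClosure (ZMod 3)) (1 : Fin 2))
        simpa using this
      have := e1.add e2
      simpa [map_ofNat] using this
    have hR2 : (-(X 0 + X 1) ^ 2 :
        MvPolynomial (Fin 2) (AlgebraicClosure (ZMod 3))).IsHomogeneous 2 := by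
      have := (((isHomogeneous_X (AlgebraicClosure (ZMod 3)) (0 : Fin 2)).add
        (isHomogeneous_X (AlgebraicClosure (ZMod 3)) (1 : Fin 2))).pow 2).neg
      simpa using this
    have hsplit : B = (2 * X 0 ^ 3 + X 0 ^ 2 * X 1) + (-(X 0 + X 1) ^ 2) := by
      rw [hB]; ring
    have hP3ne : (2 * X 0 ^ 3 + X 0 ^ 2 * X 1 :
        MvPolynomial (Fin 2) (AlgebraicClosure (ZMod 3))) ≠ 0 := by
      intro h
      have := congrArg (eval ![(1 : AlgebraicClosure (ZMod 3)), 0]) h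
      simp at this
      exact h2 this
    have htot : B.totalDegree = 3 := by
      refine le_antisymm ?_ ?_
      · rw [hsplit]
        exact (totalDegree_add _ _).trans (max_le (hT3.totalDegree_le)
          (hR2.totalDegree_le.trans (by norm_num : (2:ℕ) ≤ 3)))
      · by_contra hlt
        push_neg at hlt
        have h0 : homogeneousComponent 3 B = 0 := homogeneousComponent_eq_zero _ _ hlt
        rw [hsplit, map_add,
          homogeneousComponent_of_mem ((mem_homogeneousSubmodule _ _).mpr hT3),
          homogeneousComponent_of_mem ((mem_homogeneousSubmodule _ _).mpr hR2)] at h0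
        norm_num at h0
        exact hP3ne h0
    have hnl : ∀ a b c : AlgebraicClosure (ZMod 3), ¬(a = 0 ∧ b = 0) →
        ¬ (MvPolynomial.C a * X 0 + MvPolynomial.C b * X 1 + MvPolynomial.C c ∣ B) := by
      rintro a b c hab ⟨G, hG⟩
      by_cases hb : b = 0
      · have ha : a ≠ 0 := fun h => hab ⟨h, hb⟩
        set φ := aeval (R := AlgebraicClosure (ZMod 3))
          ![Polynomial.C (-c/a), Polynomial.X] with hφ
        have hF0 : φ (MvPolynomial.C a * X 0 + MvPolynomial.C b * X 1 + MvPolynomial.C c)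
            = 0 := by
          rw [hb]
          simp only [hφ, map_add, map_mul, aeval_X, aeval_C, Matrix.cons_val_zero,
            Matrix.cons_val_one, Matrix.head_cons, map_zero, zero_mul, add_zero,
            Polynomial.algebraMap_eq]
          rw [← Polynomial.C_mul, ← Polynomial.C_add]
          rw [show a * (-c/a) + c = 0 by field_simp; ring]
          exact Polynomial.C_0
        have hB0 : φ B = 0 := by rw [hG, map_mul, hF0, zero_mul]
        have hBexp : φ B = Polynomial.C (-1 : AlgebraicClosure (ZMod 3)) * Polynomial.X ^ 2
            + Polynomial.C ((-c/a)^2 - 2*(-c/a)) * Polynomial.X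
            + Polynomial.C (2*(-c/a)^3 - (-c/a)^2) := by
          rw [hB]
          simp only [hφ, map_add, map_sub, map_mul, map_pow, map_ofNat, aeval_X,
            Matrix.cons_val_zero, Matrix.cons_val_one, Matrix.head_cons,
            Polynomial.C_add, Polynomial.C_sub, Polynomial.C_mul, Polynomial.C_pow,
            map_neg, Polynomial.C_neg, map_one, Polynomial.C_1, Polynomial.algebraMap_eq]
          ring
        rw [hB0] at hBexp
        have hq := aux_quad_coeffs hBexp.symm
        exact one_ne_zero (α := AlgebraicClosure (ZMod 3)) (by linear_combination -hq)
      · set m := -a/b with hm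
        set k := -c/b with hk
        set φ := aeval (R := AlgebraicClosure (ZMod 3))
          ![Polynomial.X, Polynomial.C m * Polynomial.X + Polynomial.C k] with hφ
        have hmb : a + b * m = 0 := by rw [hm]; field_simp; try ring
        have hkb : b * k + c = 0 := by rw [hk]; field_simp; try ring
        have hF0 : φ (MvPolynomial.C a * X 0 + MvPolynomial.C b * X 1 + MvPolynomial.C c)
            = 0 := by
          simp only [hφ, map_add, map_mul, aeval_X, aeval_C, Matrix.cons_val_zero,
            Matrix.cons_val_one, Matrix.head_cons, Polynomial.algebraMap_eq]
          rw [show Polynomial.C a * Polynomial.X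
              + Polynomial.C b * (Polynomial.C m * Polynomial.X + Polynomial.C k)
              + Polynomial.C c
              = Polynomial.C (a + b*m) * Polynomial.X + Polynomial.C (b*k + c) from by
            rw [Polynomial.C_add, Polynomial.C_add, Polynomial.C_mul, Polynomial.C_mul]; ring]
          rw [hmb, hkb]
          simp
        have hB0 : φ B = 0 := by rw [hG, map_mul, hF0, zero_mul]
        have hBexp : φ B = Polynomial.C (2 + m) * Polynomial.X ^ 3
            + Polynomial.C (k - 1 - m^2 - 2*m) * Polynomial.X ^ 2
            + Polynomial.C (-2*m*k - 2*k) * Polynomial.X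
            + Polynomial.C (-k^2) := by
          rw [hB]
          simp only [hφ, map_add, map_sub, map_mul, map_pow, map_ofNat, aeval_X,
            Matrix.cons_val_zero, Matrix.cons_val_one, Matrix.head_cons,
            Polynomial.C_add, Polynomial.C_sub, Polynomial.C_mul, Polynomial.C_pow,
            map_neg, Polynomial.C_neg, map_one, Polynomial.C_1, Polynomial.algebraMap_eq]
          ring
        rw [hB0] at hBexp
        obtain ⟨hc3, hc2, hc1⟩ := aux_cubic_coeffs hBexp.symm
        have hk1 : k - 1 = 0 := by linear_combination hc2 + m*hc3
        exact h2 (by linear_combination hc1 + 2*k*hc3 - 2*hk1)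
    refine ⟨aux_irred_of_cubic htot hnl, ?_, ?_, ?_, ?_⟩
    · intro a b
      have hp0 : pderiv 0 B = 6 * X 0 ^2 + 2 * X 0 * X 1 - 2 * X 0 - 2 * X 1 := by
        have hBc : B = MvPolynomial.C 2 * X 0 ^ 3 + X 0 ^ 2 * X 1 - X 0 ^ 2
            - X 1 ^ 2 - MvPolynomial.C 2 * X 0 * X 1 := by
          rw [hB]; simp [map_ofNat]
        rw [hBc]
        simp only [map_add, map_sub, map_mul, pderiv_X_self, pderiv_X_of_ne,
          Derivation.leibniz, Derivation.leibniz_pow, pderiv_C, smul_eq_mul]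
        simp [map_ofNat]
        try ring
      have hp1 : pderiv 1 B = X 0 ^ 2 - 2 * X 1 - 2 * X 0 := by
        have hBc : B = MvPolynomial.C 2 * X 0 ^ 3 + X 0 ^ 2 * X 1 - X 0 ^ 2
            - X 1 ^ 2 - MvPolynomial.C 2 * X 0 * X 1 := by
          rw [hB]; simp [map_ofNat]
        rw [hBc]
        simp only [map_add, map_sub, map_mul, pderiv_X_self, pderiv_X_of_ne,
          Derivation.leibniz, Derivation.leibniz_pow, pderiv_C, smul_eq_mul]
        simp [map_ofNat]
        try ring
      rw [hp0, hp1, hB]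
      simp only [map_add, map_sub, map_mul, map_pow, eval_X, map_ofNat, Matrix.cons_val_zero,
        Matrix.cons_val_one, Matrix.head_cons]
      constructor
      · rintro ⟨e1, e2, e3⟩
        have ha3 : a^3 = 0 := by linear_combination e2 + (a-1)*e3 - a^2*h3z
        have ha : a = 0 := pow_eq_zero_iff (by norm_num) |>.mp ha3
        have hbv : (2 : AlgebraicClosure (ZMod 3)) * b = 2 * 0 := by
          linear_combination -e3 + (a-2)*ha
        exact ⟨ha, mul_left_cancel₀ h2 hbv⟩
      · rintro ⟨rfl, rfl⟩
        refine ⟨by norm_num, by norm_num, by norm_num⟩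
    · rw [hsplit, map_add,
        homogeneousComponent_of_mem ((mem_homogeneousSubmodule _ _).mpr hT3),
        homogeneousComponent_of_mem ((mem_homogeneousSubmodule _ _).mpr hR2)]
      norm_num
    · rw [hsplit, map_add,
        homogeneousComponent_of_mem ((mem_homogeneousSubmodule _ _).mpr hT3),
        homogeneousComponent_of_mem ((mem_homogeneousSubmodule _ _).mpr hR2)]
      norm_num
    · rw [hsplit, map_add,
        homogeneousComponent_of_mem ((mem_homogeneousSubmodule _ _).mpr hT3),
        homogeneousComponent_of_mem ((mem_homogeneousSubmodule _ _).mpr hR2)]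
      norm_num
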